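/- For every n and m, there exists a full assignment f on the n×m Slant board whose diagonal graph G(f) is acyclic; that is, every Slant board with no vertex constraints has a valid solution. -/

import Mathlib

/-!
Slant boards.

An `n×m` Slant board has cells indexed by `Fin n × Fin m` and vertices indexed by
`Fin (n+1) × Fin (m+1)`.  The four corners of cell `(i,j)` are the vertices
`(i,j)`, `(i+1,j)`, `(i,j+1)`, `(i+1,j+1)`.  A full assignment is a function from
cells to `Bool`: `true` means the cell contains the diagonal joining its two
corners with even coordinate sums, `false` the other diagonal.
-/

namespace Slant

abbrev Cell (n m : ℕ) := Fin n × Fin m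
abbrev Vertex (n m : ℕ) := Fin (n + 1) × Fin (m + 1)

variable {n m : ℕ}

def corner00 (c : Cell n m) : Vertex n m := (c.1.castSucc, c.2.castSucc)
def corner10 (c : Cell n m) : Vertex n m := (c.1.succ, c.2.castSucc)
def corner01 (c : Cell n m) : Vertex n m := (c.1.castSucc, c.2.succ)
def corner11 (c : Cell n m) : Vertex n m := (c.1.succ, c.2.succ)

/-- The endpoints of the diagonal of cell `c` joining the two corners whose
coordinate sums are even. -/
def evenDiag (c : Cell n m) : Vertex n m × Vertex n m :=
  if (c.1.val + c.2.val) % 2 = 0 then (corner00 c, corner11 c) else (corner10 c, corner01 c)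

/-- The endpoints of the diagonal of cell `c` joining the two corners whose
coordinate sums are odd. -/
def oddDiag (c : Cell n m) : Vertex n m × Vertex n m :=
  if (c.1.val + c.2.val) % 2 = 0 then (corner10 c, corner01 c) else (corner00 c, corner11 c)

/-- The endpoints of the diagonal chosen in cell `c` by the assignment value `b`. -/
def diagEnds (c : Cell n m) (b : Bool) : Vertex n m × Vertex n m :=
  if b then evenDiag c else oddDiag c

/-- The diagonal graph of the (partial) assignment `p`, using only the cells in `D`:
two vertices are adjacent iff the chosen diagonal of some cell in `D` joins them.
For a full assignment take `D = Set.univ`. -/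
def DiagGraph (D : Set (Cell n m)) (p : Cell n m → Bool) : SimpleGraph (Vertex n m) :=
  SimpleGraph.fromRel (fun u v => ∃ c ∈ D, diagEnds c (p c) = (u, v))

/-- `v` is one of the four corners of cell `c`. -/
def isCorner (v : Vertex n m) (c : Cell n m) : Prop :=
  v = corner00 c ∨ v = corner10 c ∨ v = corner01 c ∨ v = corner11 c

/-- The chosen diagonal of cell `c` under assignment `f` passes through vertex `v`. -/
def passesThrough (f : Cell n m → Bool) (c : Cell n m) (v : Vertex n m) : Prop :=
  (diagEnds c (f c)).1 = v ∨ (diagEnds c (f c)).2 = v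

/-- The degree of a vertex in a graph on the board's vertices. -/
noncomputable def deg (G : SimpleGraph (Vertex n m)) (v : Vertex n m) : ℕ :=
  (G.neighborSet v).ncard

/-- A non-nil walk can be written as a `concat`. -/
lemma exists_concat_of_not_nil {V : Type*} {G : SimpleGraph V} :
    ∀ {u v : V} (q : G.Walk u v), ¬ q.Nil →
      ∃ (x : V) (r : G.Walk u x) (h : G.Adj x v), q = r.concat h := by
  intro u v q
  induction q with
  | nil => intro h; exact absurd SimpleGraph.Walk.nil_nil h
  | @cons a b c h p ih =>
    intro _
    by_cases hp : p.Nil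
    · cases p with
      | nil => exact ⟨a, SimpleGraph.Walk.nil, h, rfl⟩
      | cons h' q' => exact absurd hp (by simp)
    · obtain ⟨x, r, hx, hr⟩ := ih hp
      exact ⟨x, SimpleGraph.Walk.cons h r, hx, by rw [hr, SimpleGraph.Walk.concat_cons]⟩

/-- A graph with an injective grading that changes by exactly 1 along each edge is acyclic. -/
lemma acyclic_of_grading {V : Type*} {G : SimpleGraph V} (φ : V → ℕ)
    (hinj : Function.Injective φ)
    (hstep : ∀ {u v : V}, G.Adj u v → φ u = φ v + 1 ∨ φ v = φ u + 1) :
    G.IsAcyclic := by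
  classical
  -- First, no cycle can start at a vertex of maximal grading on its support.
  have aux : ∀ (u : V) (p : G.Walk u u), p.IsCycle →
      (∀ w ∈ p.support, φ w ≤ φ u) → False := by
    intro u p hp hmax
    obtain ⟨a, ha, q, rfl⟩ := (SimpleGraph.Walk.not_nil_iff).mp hp.not_nil
    rw [SimpleGraph.Walk.cons_isCycle_iff] at hp
    obtain ⟨hqpath, hqe⟩ := hp
    have hqnil : ¬ q.Nil := SimpleGraph.Walk.not_nil_of_ne (Ne.symm ha.ne)
    obtain ⟨x, r, hx, rfl⟩ := exists_concat_of_not_nil q hqnil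
    -- grades of the two neighbors of `u` on the cycle
    have hamem : a ∈ (SimpleGraph.Walk.cons ha (r.concat hx)).support := by
      simp [SimpleGraph.Walk.support_cons]
    have hxmem : x ∈ (SimpleGraph.Walk.cons ha (r.concat hx)).support := by
      simp only [SimpleGraph.Walk.support_cons, SimpleGraph.Walk.support_concat]
      simp only [List.concat_eq_append, List.mem_cons, List.mem_append]
      exact Or.inr (Or.inl r.end_mem_support)
    have h1 : φ u = φ a + 1 := by
      rcases hstep ha with h | h
      · exact h
      · have := hmax a hamem; omega
    have h2 : φ u = φ x + 1 := by
      rcases hstep hx.symm with h | h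
      · exact h
      · have := hmax x hxmem; omega
    have hax : a = x := hinj (by omega)
    subst hax
    exact hqe (by simp [Sym2.eq_swap])
  intro v c hc
  obtain ⟨u, hu, hmaxu⟩ := Finset.exists_max_image c.support.toFinset φ
    ⟨v, List.mem_toFinset.mpr c.start_mem_support⟩
  rw [List.mem_toFinset] at hu
  refine aux u (c.rotate u hu) (hc.rotate hu) ?_
  intro w hw
  rw [(c.rotate u hu).support_eq_cons] at hw
  rcases List.mem_cons.mp hw with rfl | hw
  · exact le_rfl
  · have : w ∈ c.support.tail := (SimpleGraph.Walk.support_rotate c u hu).mem_iff.mp hw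
    have : w ∈ c.support := by rw [c.support_eq_cons]; exact List.mem_cons_of_mem _ this
    exact hmaxu w (List.mem_toFinset.mpr this)

/-- The grading on vertices used to prove acyclicity. -/
def grade (v : Vertex n m) : ℕ := (v.1.val + v.2.val) * (n + 1) + v.1.val

lemma grade_injective : Function.Injective (grade (n := n) (m := m)) := by
  intro u v h
  unfold grade at h
  have hu1 : u.1.val < n + 1 := u.1.isLt
  have hv1 : v.1.val < n + 1 := v.1.isLt
  have h1 : u.1.val = v.1.val := by
    have h' := congrArg (· % (n + 1)) h
    simp only [Nat.add_comm _ (u.1.val), Nat.add_comm _ (v.1.val),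
      Nat.add_mul_mod_self_right] at h'
    rwa [Nat.mod_eq_of_lt hu1, Nat.mod_eq_of_lt hv1] at h'
  have h2 : u.2.val = v.2.val := by
    rw [h1] at h
    have := Nat.eq_of_mul_eq_mul_right (Nat.succ_pos n) (by omega :
      (v.1.val + u.2.val) * (n + 1) = (v.1.val + v.2.val) * (n + 1))
    omega
  exact Prod.ext (Fin.ext h1) (Fin.ext h2)

/-- Every Slant board with no vertex constraints has a valid solution:
there is a full assignment whose diagonal graph is acyclic. -/
theorem exists_acyclic_assignment (n m : ℕ) :
    ∃ f : Cell n m → Bool, (DiagGraph (Set.univ : Set (Cell n m)) f).IsAcyclic := by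
  -- all diagonals are "/" : choose the even diagonal exactly when i+j is odd
  refine ⟨fun c => decide ((c.1.val + c.2.val) % 2 = 1), ?_⟩
  have hends : ∀ c : Cell n m,
      diagEnds c (decide ((c.1.val + c.2.val) % 2 = 1)) = (corner10 c, corner01 c) := by
    intro c
    rcases Nat.mod_two_eq_zero_or_one (c.1.val + c.2.val) with h | h <;>
      simp [diagEnds, evenDiag, oddDiag, h]
  apply acyclic_of_grading (grade (n := n) (m := m)) grade_injective
  intro u v huv
  rw [DiagGraph, SimpleGraph.fromRel_adj] at huv
  obtain ⟨-, h | h⟩ := huv <;> obtain ⟨c, -, hc⟩ := h <;> rw [hends c] at hc <;>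
    obtain ⟨h1, h2⟩ := Prod.mk.injEq .. ▸ hc
  · left
    subst h1 h2
    simp [grade, corner10, corner01, Fin.val_succ, Fin.coe_castSucc]
    ring
  · right
    subst h1 h2
    simp [grade, corner10, corner01, Fin.val_succ, Fin.coe_castSucc]
    ring

end Slant
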